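/- Let N ≥ 1 and let U ⊂ ℝ^N be a closed set. Then U is convex if and only if 𝒪(x) ≤ 0 for every x ∈ ℝ^N ∖ U. (In particular, every nonempty convex set U satisfies 𝒪(x) ≤ 0 for every x ∉ cl(U).) -/

import Mathlib

open Filter Metric Set
open scoped Topology

noncomputable section

/-- The set `π_x` of orthogonal projections of `x` onto `cl(U)`. -/
def projSet {N : ℕ} (U : Set (EuclideanSpace ℝ (Fin N))) (x : EuclideanSpace ℝ (Fin N)) :
    Set (EuclideanSpace ℝ (Fin N)) :=
  {ξ ∈ closure U | dist x ξ = Metric.infDist x U}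

/-- The opening `𝒪(x)` of `U` at `x`, as an extended real number:
`𝒪(x) = sup { ((x-ξ)/|x-ξ|)·((y-ξ)/|y-ξ|) : ξ ∈ π_x, y ∈ U∖{ξ} }`,
the supremum over the empty set being `-∞` (which covers the convention for
`U` empty or a singleton). -/
def opening {N : ℕ} (U : Set (EuclideanSpace ℝ (Fin N))) (x : EuclideanSpace ℝ (Fin N)) :
    EReal :=
  sSup ((fun p : EuclideanSpace ℝ (Fin N) × EuclideanSpace ℝ (Fin N) =>
      ((inner ℝ (‖x - p.1‖⁻¹ • (x - p.1)) (‖p.2 - p.1‖⁻¹ • (p.2 - p.1)) : ℝ) : EReal)) ''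
    {p | p.1 ∈ projSet U x ∧ p.2 ∈ U \ {p.1}})

/-- A closed set `U ⊆ ℝ^N` is convex if and only if its opening satisfies `𝒪(x) ≤ 0`
for every `x ∈ ℝ^N ∖ U`. -/
theorem convex_iff_opening_nonpos
    (N : ℕ) (hN : 1 ≤ N)
    (U : Set (EuclideanSpace ℝ (Fin N))) (hU : IsClosed U) :
    Convex ℝ U ↔ ∀ x ∉ U, opening U x ≤ 0 := by
  constructor
  · intro hconv x hx
    apply sSup_le
    rintro e ⟨⟨ξ, y⟩, ⟨⟨hξc, hξd⟩, hyU, hyne⟩, rfl⟩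
    rw [hU.closure_eq] at hξc
    have hinner : (inner ℝ (x - ξ) (y - ξ) : ℝ) ≤ 0 := by
      refine (norm_eq_iInf_iff_real_inner_le_zero hconv hξc (u := x)).mp ?_ y hyU
      rw [Metric.infDist_eq_iInf] at hξd
      simp only [dist_eq_norm] at hξd
      exact hξd
    have : (inner ℝ (‖x - ξ‖⁻¹ • (x - ξ)) (‖y - ξ‖⁻¹ • (y - ξ)) : ℝ) ≤ 0 := by
      rw [real_inner_smul_left, real_inner_smul_right]
      have h1 : (0:ℝ) ≤ ‖x - ξ‖⁻¹ := inv_nonneg.mpr (norm_nonneg _)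
      have h2 : (0:ℝ) ≤ ‖y - ξ‖⁻¹ := inv_nonneg.mpr (norm_nonneg _)
      exact mul_nonpos_of_nonneg_of_nonpos h1 (mul_nonpos_of_nonneg_of_nonpos h2 hinner)
    dsimp only
    exact_mod_cast this
  · intro h
    intro a ha b hb t s ht hs hts
    by_contra hz
    set x := t • a + s • b with hxdef
    have hUne : U.Nonempty := ⟨a, ha⟩
    obtain ⟨ξ, hξU, hξd⟩ := hU.exists_infDist_eq_dist hUne x
    have hxξ : x ≠ ξ := fun e => hz (e ▸ hξU)
    have hnx : (0:ℝ) < ‖x - ξ‖ := by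
      rw [norm_pos_iff, sub_ne_zero]; exact hxξ
    have key : ∀ y ∈ U, (inner ℝ (x - ξ) (y - ξ) : ℝ) ≤ 0 := by
      intro y hy
      rcases eq_or_ne y ξ with rfl | hyne
      · simp
      · have hmem : ((ξ, y) : _ × _) ∈
            {p : EuclideanSpace ℝ (Fin N) × EuclideanSpace ℝ (Fin N) |
              p.1 ∈ projSet U x ∧ p.2 ∈ U \ {p.1}} := by
          refine ⟨⟨subset_closure hξU, ?_⟩, hy, hyne⟩
          exact hξd.symm
        have hop := h x hz
        rw [opening] at hop
        have hmem2 : ((inner ℝ (‖x - ξ‖⁻¹ • (x - ξ)) (‖y - ξ‖⁻¹ • (y - ξ)) : ℝ) : EReal) ∈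
            ((fun p : EuclideanSpace ℝ (Fin N) × EuclideanSpace ℝ (Fin N) =>
              ((inner ℝ (‖x - p.1‖⁻¹ • (x - p.1)) (‖p.2 - p.1‖⁻¹ • (p.2 - p.1)) : ℝ) : EReal)) ''
            {p | p.1 ∈ projSet U x ∧ p.2 ∈ U \ {p.1}}) := ⟨(ξ, y), hmem, rfl⟩
        have hle : ((inner ℝ (‖x - ξ‖⁻¹ • (x - ξ)) (‖y - ξ‖⁻¹ • (y - ξ)) : ℝ) : EReal) ≤ 0 :=
          le_trans (le_sSup hmem2) hop
        have hle' : (inner ℝ (‖x - ξ‖⁻¹ • (x - ξ)) (‖y - ξ‖⁻¹ • (y - ξ)) : ℝ) ≤ 0 := by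
          exact_mod_cast hle
        rw [real_inner_smul_left, real_inner_smul_right] at hle'
        have hny : (0:ℝ) < ‖y - ξ‖ := by
          rw [norm_pos_iff, sub_ne_zero]; exact hyne
        nlinarith [inv_pos.mpr hnx, inv_pos.mpr hny,
          mul_pos (inv_pos.mpr hnx) (inv_pos.mpr hny)]
    have hxs : x - ξ = t • (a - ξ) + s • (b - ξ) := by
      calc x - ξ = t • a + s • b - (t + s) • ξ := by rw [hts, one_smul]
        _ = t • (a - ξ) + s • (b - ξ) := by module
    have hfin : (inner ℝ (x - ξ) (x - ξ) : ℝ) ≤ 0 := by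
      nth_rewrite 2 [hxs]
      rw [inner_add_right, real_inner_smul_right, real_inner_smul_right]
      exact add_nonpos (mul_nonpos_of_nonneg_of_nonpos ht (key a ha))
        (mul_nonpos_of_nonneg_of_nonpos hs (key b hb))
    have := real_inner_self_eq_norm_sq (x - ξ)
    nlinarith
end
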